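/- Let r be a prime, let α be a positive integer, let m1, n, p be natural numbers with r not dividing m1 and m1·p ≤ n. Then [r^α divides n − m1·p and r^(α+1) does not divide n − m1·p] if and only if there exists an integer j with 1 ≤ j ≤ r−1 such that, in ZMod (r^(α+1)), (p) = (n)·(m1)⁻¹ + j·(r^α). -/
import Mathlib

theorem stmt_6 (r : ℕ) (hr : r.Prime) (α : ℕ) (hα : 0 < α) (m1 n p : ℕ)
    (hrm1 : ¬ r ∣ m1) (hpn : m1 * p ≤ n) :
    ((r : ℤ) ^ α ∣ (n : ℤ) - (m1 : ℤ) * p ∧ ¬ (r : ℤ) ^ (α + 1) ∣ (n : ℤ) - (m1 : ℤ) * p) ↔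
      ∃ j : ℕ, 1 ≤ j ∧ j ≤ r - 1 ∧
        (p : ZMod (r ^ (α + 1))) =
          (n : ZMod (r ^ (α + 1))) * (m1 : ZMod (r ^ (α + 1)))⁻¹ +
            (j : ZMod (r ^ (α + 1))) * (r : ZMod (r ^ (α + 1))) ^ α := by
  haveI : Fact r.Prime := ⟨hr⟩
  haveI : NeZero (r ^ (α + 1)) := ⟨pow_ne_zero _ hr.pos.ne'⟩
  set M := r ^ (α + 1) with hM
  have hcopr : Nat.Coprime m1 r := (Nat.coprime_comm.mp (hr.coprime_iff_not_dvd.mpr hrm1))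
  have hcop : Nat.Coprime m1 M := hcopr.pow_right _
  have hunit : IsUnit (m1 : ZMod M) := (ZMod.isUnit_iff_coprime m1 M).mpr hcop
  have hinv : (m1 : ZMod M) * (m1 : ZMod M)⁻¹ = 1 := ZMod.coe_mul_inv_eq_one m1 hcop
  set x : ℤ := (n : ℤ) - (m1 : ℤ) * p with hx
  -- rewrite each P j as a divisibility
  have hPj : ∀ j : ℕ, ((p : ZMod M) = (n : ZMod M) * (m1 : ZMod M)⁻¹ +
      (j : ZMod M) * (r : ZMod M) ^ α) ↔ (M : ℤ) ∣ x + (m1 : ℤ) * j * r ^ α := by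
    intro j
    have step1 : ((p : ZMod M) = (n : ZMod M) * (m1 : ZMod M)⁻¹ +
        (j : ZMod M) * (r : ZMod M) ^ α) ↔
        ((m1 : ZMod M) * p = (n : ZMod M) + (m1 : ZMod M) * j * (r : ZMod M) ^ α) := by
      constructor
      · intro h
        rw [h]
        have : (m1 : ZMod M) * ((n : ZMod M) * (m1 : ZMod M)⁻¹ + (j : ZMod M) * (r : ZMod M) ^ α)
            = (n : ZMod M) * ((m1 : ZMod M) * (m1 : ZMod M)⁻¹) +
              (m1 : ZMod M) * j * (r : ZMod M) ^ α := by ring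
        rw [this, hinv, mul_one]
      · intro h
        apply hunit.mul_left_cancel
        rw [h]
        have : (m1 : ZMod M) * ((n : ZMod M) * (m1 : ZMod M)⁻¹ + (j : ZMod M) * (r : ZMod M) ^ α)
            = (n : ZMod M) * ((m1 : ZMod M) * (m1 : ZMod M)⁻¹) +
              (m1 : ZMod M) * j * (r : ZMod M) ^ α := by ring
        rw [this, hinv, mul_one]
    rw [step1]
    have step2 : ((m1 : ZMod M) * p = (n : ZMod M) + (m1 : ZMod M) * j * (r : ZMod M) ^ α) ↔
        (((m1 * p : ℕ) : ZMod M) = ((n + m1 * j * r ^ α : ℕ) : ZMod M)) := by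
      push_cast; rfl
    rw [step2, ZMod.natCast_eq_natCast_iff, Nat.modEq_iff_dvd]
    constructor
    · intro h
      have : ((n + m1 * j * r ^ α : ℕ) : ℤ) - (m1 * p : ℕ) = x + (m1 : ℤ) * j * r ^ α := by
        push_cast; ring
      rwa [this] at h
    · intro h
      have : ((n + m1 * j * r ^ α : ℕ) : ℤ) - (m1 * p : ℕ) = x + (m1 : ℤ) * j * r ^ α := by
        push_cast; ring
      rwa [this]
  simp only [hPj]
  constructor
  · rintro ⟨⟨t, ht⟩, h2⟩
    have hrt : ¬ (r : ℤ) ∣ t := by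
      intro ⟨s, hs⟩
      exact h2 ⟨s, by rw [ht, hs]; ring⟩
    have htne : ((t : ZMod r)) ≠ 0 := by
      rw [Ne, ZMod.intCast_zmod_eq_zero_iff_dvd]
      exact_mod_cast hrt
    have hm1ne : ((m1 : ZMod r))⁻¹ ≠ 0 := by
      have h1 : (m1 : ZMod r) * (m1 : ZMod r)⁻¹ = 1 := ZMod.coe_mul_inv_eq_one m1 hcopr
      intro h
      rw [h, mul_zero] at h1
      exact zero_ne_one h1
    set e : ZMod r := -(t : ZMod r) * (m1 : ZMod r)⁻¹ with he
    have hene : e ≠ 0 := mul_ne_zero (neg_ne_zero.mpr htne) hm1ne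
    refine ⟨e.val, ?_, ?_, ?_⟩
    · exact Nat.one_le_iff_ne_zero.mpr (fun h => hene (by rwa [ZMod.val_eq_zero] at h))
    · exact Nat.le_sub_one_of_lt (ZMod.val_lt e)
    · have hcast : ((e.val : ℕ) : ZMod r) = e := ZMod.natCast_rightInverse e
      have hzero : ((t + m1 * e.val : ℤ) : ZMod r) = 0 := by
        push_cast [hcast]
        rw [he]
        have h1 : (m1 : ZMod r) * (m1 : ZMod r)⁻¹ = 1 := ZMod.coe_mul_inv_eq_one m1 hcopr
        calc (t : ZMod r) + (m1 : ZMod r) * (-(t : ZMod r) * (m1 : ZMod r)⁻¹)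
            = (t : ZMod r) - (t : ZMod r) * ((m1 : ZMod r) * (m1 : ZMod r)⁻¹) := by ring
          _ = 0 := by rw [h1, mul_one, sub_self]
      have hdvd : (r : ℤ) ∣ t + m1 * e.val := by
        rwa [ZMod.intCast_zmod_eq_zero_iff_dvd] at hzero
      have : x + (m1 : ℤ) * e.val * r ^ α = r ^ α * (t + m1 * e.val) := by rw [ht]; ring
      rw [hM, this]
      push_cast
      rw [pow_succ]
      exact mul_dvd_mul_left _ hdvd
  · rintro ⟨j, hj1, hj2, hd⟩
    have hMx : ((M : ℕ) : ℤ) = (r : ℤ) ^ (α + 1) := by rw [hM]; push_cast; ring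
    rw [hMx] at hd
    have hra : (r : ℤ) ^ α ∣ (m1 : ℤ) * j * r ^ α := ⟨(m1 : ℤ) * j, by ring⟩
    constructor
    · have h1 : (r : ℤ) ^ α ∣ x + (m1 : ℤ) * j * r ^ α :=
        dvd_trans (pow_dvd_pow _ (Nat.le_succ α)) hd
      have := dvd_sub h1 hra
      simpa using this
    · intro hcon
      have h2 : (r : ℤ) ^ (α + 1) ∣ (m1 : ℤ) * j * r ^ α := by
        have := dvd_sub hd hcon
        simpa using this
      have h3 : (r : ℤ) ∣ (m1 : ℤ) * j := by
        rcases h2 with ⟨s, hs⟩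
        refine ⟨s, ?_⟩
        have hrne : ((r : ℤ) ^ α) ≠ 0 := pow_ne_zero _ (by exact_mod_cast hr.pos.ne')
        apply mul_right_cancel₀ hrne
        linear_combination hs
      have h4 : r ∣ m1 * j := by exact_mod_cast h3
      rcases (Nat.Prime.dvd_mul hr).mp h4 with h | h
      · exact hrm1 h
      · have : r ≤ j := Nat.le_of_dvd hj1 h
        omega
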